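/- arXiv:1709.07578 — 3 statements merged into one kernel-verified Lean document; each statement's English description precedes it below -/
import Mathlib

section
/- For the hub-and-two-spoke kernel K on ℤ with parameters 0 < b < 1/2, a = 1−b and ρ = 2√(ab), the functions h_ξ(y) = (1+|y|+ξy)(√(a/b))^{|y|}, ξ ∈ [−1,1], are nonnegative ρ-harmonic: ∑_z K(y,z) h_ξ(z) = ρ h_ξ(y) for all y ∈ ℤ. Moreover, every nonnegative ρ-harmonic function h with h(0) = 1 equals h_ξ for some ξ ∈ [−1,1]. -/
open Filter Topology

/-- For the hub-and-two-spoke kernel, the functions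
`h_ξ(y) = (1 + |y| + ξy)(√(a/b))^{|y|}`, `ξ ∈ [-1,1]`, are nonnegative and
`ρ`-harmonic, and every nonnegative `ρ`-harmonic function normalized by
`h(0) = 1` is of this form. -/
theorem hub_two_spoke_harmonic_family
    (a b ρ : ℝ) (hb0 : 0 < b) (hb : b < 1 / 2) (ha : a = 1 - b)
    (hρ : ρ = 2 * Real.sqrt (a * b))
    (K : ℤ → ℤ → ℝ)
    (hK : ∀ x y : ℤ, K x y =
      if x = 0 then (if y = 1 ∨ y = -1 then b / 2 else 0)
      else if 0 < x then (if y = x + 1 then b else if y = x - 1 then a else 0)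
      else (if y = x - 1 then b else if y = x + 1 then a else 0))
    (h : ℝ → ℤ → ℝ)
    (hh : ∀ ξ : ℝ, ∀ y : ℤ, h ξ y =
      (1 + (y.natAbs : ℝ) + ξ * (y : ℝ)) * Real.sqrt (a / b) ^ y.natAbs) :
    (∀ ξ ∈ Set.Icc (-1 : ℝ) 1,
      (∀ y : ℤ, 0 ≤ h ξ y) ∧ ∀ y : ℤ, ∑' z : ℤ, K y z * h ξ z = ρ * h ξ y) ∧
    ∀ g : ℤ → ℝ, (∀ y, 0 ≤ g y) → (∀ y : ℤ, ∑' z : ℤ, K y z * g z = ρ * g y) →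
      g 0 = 1 → ∃ ξ ∈ Set.Icc (-1 : ℝ) 1, g = h ξ := by
  set r : ℝ := Real.sqrt (a / b) with hrdef
  have ha0 : (0 : ℝ) < a := by rw [ha]; linarith
  have hr0 : (0 : ℝ) < r := Real.sqrt_pos.mpr (div_pos ha0 hb0)
  have hr2 : r ^ 2 = a / b := Real.sq_sqrt (le_of_lt (div_pos ha0 hb0))
  have hbr2 : a = b * r ^ 2 := by rw [hr2]; field_simp
  have hρ' : ρ = 2 * (b * r) := by
    rw [hρ]
    congr 1
    rw [show a * b = b ^ 2 * (a / b) by field_simp,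
      Real.sqrt_mul (sq_nonneg b), Real.sqrt_sq hb0.le]
  -- values of h at nonnegative and nonpositive integers
  have hval : ∀ ξ : ℝ, ∀ n : ℕ,
      h ξ (n : ℤ) = (1 + (1 + ξ) * n) * r ^ n ∧
      h ξ (-(n : ℤ)) = (1 + (1 - ξ) * n) * r ^ n := by
    intro ξ n
    constructor
    · rw [hh]; simp only [Int.natAbs_natCast]; push_cast; ring
    · rw [hh]; simp only [Int.natAbs_neg, Int.natAbs_natCast]; push_cast; ring
  -- the tsum is a two-point sum
  have hsum : ∀ (y : ℤ) (f : ℤ → ℝ),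
      ∑' z, K y z * f z = K y (y + 1) * f (y + 1) + K y (y - 1) * f (y - 1) := by
    intro y f
    have hs : ∀ z ∉ ({y + 1, y - 1} : Finset ℤ), K y z * f z = 0 := by
      intro z hz
      simp only [Finset.mem_insert, Finset.mem_singleton] at hz
      push_neg at hz
      have : K y z = 0 := by
        rw [hK]
        split_ifs with h1 h2 h3 h4 h5 h6 <;>
          first
          | rfl
          | (exfalso; rcases h2 with h2 | h2 <;> omega)
          | (exfalso; omega)
      rw [this, zero_mul]
    rw [tsum_eq_sum hs, Finset.sum_pair (show y + 1 ≠ y - 1 by omega)]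
  have hK1 : ∀ y : ℤ, 0 < y → K y (y + 1) = b ∧ K y (y - 1) = a := by
    intro y hy
    constructor <;> (rw [hK]; split_ifs <;> first | rfl | (exfalso; omega))
  have hK2 : ∀ y : ℤ, y < 0 → K y (y + 1) = a ∧ K y (y - 1) = b := by
    intro y hy
    constructor <;> (rw [hK]; split_ifs <;> first | rfl | (exfalso; omega))
  have hK0 : K 0 1 = b / 2 ∧ K 0 (-1) = b / 2 := by
    constructor <;> (rw [hK]; norm_num)
  -- the key algebraic identity from the characteristic equation
  have key : ∀ (c : ℝ) (n : ℕ),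
      b * ((1 + c * ((n : ℝ) + 2)) * r ^ (n + 2)) + a * ((1 + c * (n : ℝ)) * r ^ n)
        = ρ * ((1 + c * ((n : ℝ) + 1)) * r ^ (n + 1)) := by
    intro c n
    rw [hbr2, hρ']
    ring
  constructor
  · -- the family h ξ is nonnegative and ρ-harmonic
    intro ξ hξ
    obtain ⟨hξ1, hξ2⟩ := hξ
    constructor
    · intro y
      rw [hh]
      have h1 : (0 : ℝ) ≤ r ^ y.natAbs := pow_nonneg hr0.le _
      have hy : |(y : ℝ)| = (y.natAbs : ℝ) := by
        rw [Nat.cast_natAbs, Int.cast_abs]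
      have h2 : 0 ≤ 1 + (y.natAbs : ℝ) + ξ * y := by
        have habs : |ξ * (y : ℝ)| ≤ (y.natAbs : ℝ) := by
          rw [abs_mul, ← hy]
          calc |ξ| * |(y : ℝ)| ≤ 1 * |(y : ℝ)| := by
                apply mul_le_mul_of_nonneg_right _ (abs_nonneg _)
                rw [abs_le]; exact ⟨hξ1, hξ2⟩
            _ = |(y : ℝ)| := one_mul _
        have := neg_abs_le (ξ * (y : ℝ))
        linarith
      exact mul_nonneg h2 h1
    · intro y
      rw [hsum y (h ξ)]
      rcases lt_trichotomy y 0 with hy | rfl | hy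
      · obtain ⟨n, rfl⟩ : ∃ n : ℕ, y = -((n : ℤ) + 1) := ⟨(-y - 1).toNat, by omega⟩
        rw [(hK2 _ hy).1, (hK2 _ hy).2,
          show -((n : ℤ) + 1) + 1 = -(n : ℤ) by ring,
          show -((n : ℤ) + 1) - 1 = -((n + 2 : ℕ) : ℤ) by push_cast; ring,
          show -((n : ℤ) + 1) = -((n + 1 : ℕ) : ℤ) by push_cast; ring,
          (hval ξ n).2, (hval ξ (n + 2)).2, (hval ξ (n + 1)).2]
        push_cast
        linear_combination key (1 - ξ) n
      · rw [show (0 : ℤ) + 1 = 1 by ring, show (0 : ℤ) - 1 = -1 by ring, hK0.1, hK0.2,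
          show (1 : ℤ) = ((1 : ℕ) : ℤ) by norm_num]
        rw [(hval ξ 1).1, (hval ξ 1).2,
          show (0 : ℤ) = ((0 : ℕ) : ℤ) by norm_num, (hval ξ 0).1]
        rw [hρ']
        push_cast
        ring
      · obtain ⟨n, rfl⟩ : ∃ n : ℕ, y = (n : ℤ) + 1 := ⟨(y - 1).toNat, by omega⟩
        rw [(hK1 _ hy).1, (hK1 _ hy).2,
          show (n : ℤ) + 1 + 1 = ((n + 2 : ℕ) : ℤ) by push_cast; ring,
          show (n : ℤ) + 1 - 1 = (n : ℤ) by ring,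
          show (n : ℤ) + 1 = ((n + 1 : ℕ) : ℤ) by push_cast; ring,
          (hval ξ (n + 2)).1, (hval ξ n).1, (hval ξ (n + 1)).1]
        push_cast
        linear_combination key (1 + ξ) n
  · -- uniqueness
    intro g hg0 hgh hg1
    -- recurrences
    have recP : ∀ n : ℕ, b * g ((n : ℤ) + 2) + a * g (n : ℤ) = ρ * g ((n : ℤ) + 1) := by
      intro n
      have hy : (0 : ℤ) < (n : ℤ) + 1 := by omega
      have := hgh ((n : ℤ) + 1)
      rw [hsum, (hK1 _ hy).1, (hK1 _ hy).2,
        show (n : ℤ) + 1 + 1 = (n : ℤ) + 2 by ring,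
        show (n : ℤ) + 1 - 1 = (n : ℤ) by ring] at this
      linarith
    have recN : ∀ n : ℕ, b * g (-((n : ℤ) + 2)) + a * g (-(n : ℤ)) = ρ * g (-((n : ℤ) + 1)) := by
      intro n
      have hy : (-((n : ℤ) + 1)) < 0 := by omega
      have := hgh (-((n : ℤ) + 1))
      rw [hsum, (hK2 _ hy).1, (hK2 _ hy).2,
        show -((n : ℤ) + 1) + 1 = -(n : ℤ) by ring,
        show -((n : ℤ) + 1) - 1 = -((n : ℤ) + 2) by ring] at this
      linarith
    have hub : b / 2 * g 1 + b / 2 * g (-1) = ρ := by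
      have := hgh 0
      rw [hsum, show (0 : ℤ) + 1 = 1 by ring, show (0 : ℤ) - 1 = -1 by ring,
        hK0.1, hK0.2, hg1, mul_one] at this
      exact this
    set B : ℝ := g 1 / r - 1 with hBdef
    set D : ℝ := g (-1) / r - 1 with hDdef
    have hg1' : g 1 = (1 + B) * r := by rw [hBdef, add_sub_cancel, div_mul_cancel₀ _ hr0.ne']
    have hgm1' : g (-1) = (1 + D) * r := by rw [hDdef, add_sub_cancel, div_mul_cancel₀ _ hr0.ne']
    -- solve recurrence on the positive side
    have posf : ∀ n : ℕ, g (n : ℤ) = (1 + B * n) * r ^ n := by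
      have H : ∀ n : ℕ, g (n : ℤ) = (1 + B * n) * r ^ n ∧
          g ((n : ℤ) + 1) = (1 + B * (n + 1)) * r ^ (n + 1) := by
        intro n
        induction n with
        | zero => simp only [Nat.cast_zero, zero_add]; constructor
                  · simpa using hg1
                  · simpa using hg1'
        | succ n ih =>
          have h1 : g ((n + 1 : ℕ) : ℤ) = (1 + B * ((n : ℝ) + 1)) * r ^ (n + 1) := by
            rw [show ((n + 1 : ℕ) : ℤ) = (n : ℤ) + 1 by push_cast; ring]
            exact_mod_cast ih.2
          refine ⟨by push_cast at h1 ⊢; exact h1, ?_⟩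
          have hrec := recP n
          rw [ih.1, ih.2] at hrec
          have hb2 : b * g ((n : ℤ) + 2) = b * ((1 + B * ((n : ℝ) + 2)) * r ^ (n + 2)) := by
            linear_combination hrec - key B n
          have := mul_left_cancel₀ (ne_of_gt hb0) hb2
          rw [show ((n + 1 : ℕ) : ℤ) + 1 = (n : ℤ) + 2 by push_cast; ring, this]
          push_cast
          ring
      intro n; exact (H n).1
    have negf : ∀ n : ℕ, g (-(n : ℤ)) = (1 + D * n) * r ^ n := by
      have H : ∀ n : ℕ, g (-(n : ℤ)) = (1 + D * n) * r ^ n ∧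
          g (-((n : ℤ) + 1)) = (1 + D * (n + 1)) * r ^ (n + 1) := by
        intro n
        induction n with
        | zero => simp only [Nat.cast_zero, neg_zero, zero_add]; constructor
                  · simpa using hg1
                  · simpa using hgm1'
        | succ n ih =>
          have h1 : g (-((n + 1 : ℕ) : ℤ)) = (1 + D * ((n : ℝ) + 1)) * r ^ (n + 1) := by
            rw [show ((n + 1 : ℕ) : ℤ) = (n : ℤ) + 1 by push_cast; ring]
            exact_mod_cast ih.2
          refine ⟨by push_cast at h1 ⊢; exact h1, ?_⟩
          have hrec := recN n
          rw [ih.1, ih.2] at hrec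
          have hb2 : b * g (-((n : ℤ) + 2)) = b * ((1 + D * ((n : ℝ) + 2)) * r ^ (n + 2)) := by
            linear_combination hrec - key D n
          have := mul_left_cancel₀ (ne_of_gt hb0) hb2
          rw [show -(((n + 1 : ℕ) : ℤ) + 1) = -((n : ℤ) + 2) by push_cast; ring, this]
          push_cast
          ring
      intro n; exact (H n).1
    -- from the hub equation: B + D = 2
    have hBD : B + D = 2 := by
      rw [hg1', hgm1', hρ'] at hub
      have hbr : b * r ≠ 0 := by positivity
      field_simp at hub
      nlinarith [hub, mul_pos hb0 hr0]
    -- B ≥ 0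
    have hBnn : 0 ≤ B := by
      by_contra hB
      push_neg at hB
      obtain ⟨n, hn⟩ := exists_nat_gt (1 / (-B))
      have h1 : 1 + B * n < 0 := by
        have hB' : 0 < -B := by linarith
        have : 1 / (-B) * (-B) < n * (-B) := by
          apply mul_lt_mul_of_pos_right hn hB'
        rw [one_div_mul_cancel (ne_of_gt hB')] at this
        nlinarith
      have h2 : g (n : ℤ) < 0 := by
        rw [posf n]
        exact mul_neg_of_neg_of_pos h1 (pow_pos hr0 n)
      exact absurd (hg0 (n : ℤ)) (not_le.mpr h2)
    have hDnn : 0 ≤ D := by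
      by_contra hD
      push_neg at hD
      obtain ⟨n, hn⟩ := exists_nat_gt (1 / (-D))
      have h1 : 1 + D * n < 0 := by
        have hD' : 0 < -D := by linarith
        have : 1 / (-D) * (-D) < n * (-D) := by
          apply mul_lt_mul_of_pos_right hn hD'
        rw [one_div_mul_cancel (ne_of_gt hD')] at this
        nlinarith
      have h2 : g (-(n : ℤ)) < 0 := by
        rw [negf n]
        exact mul_neg_of_neg_of_pos h1 (pow_pos hr0 n)
      exact absurd (hg0 (-(n : ℤ))) (not_le.mpr h2)
    refine ⟨B - 1, ⟨by linarith, by linarith⟩, ?_⟩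
    funext y
    obtain ⟨n, rfl | rfl⟩ := Int.eq_nat_or_neg y
    · rw [posf n, (hval (B - 1) n).1]
      ring
    · rw [negf n, (hval (B - 1) n).2]
      have : 1 - (B - 1) = D := by linarith
      rw [this]
end

section
/- For the hub-and-two-spoke model, every ρ-invariant probability measure σ for K can be written as σ = ((1+ξ)/2) σ_1 + ((1−ξ)/2) σ_{−1} for some ξ ∈ [−1,1], where σ_{±1} are the extreme members of the family σ_ξ; equivalently σ_ξ(y) = ((1+ξ)/2)σ_1(y) + ((1−ξ)/2)σ_{−1}(y) for all y ∈ ℤ. -/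
open Filter Topology

private lemma linear_geo_aux (a b ρ r : ℝ) (ha : a ≠ 0) (hb : b = a * r ^ 2)
    (hρ : ρ = 2 * a * r) (f : ℕ → ℝ) (c d : ℝ)
    (h0 : f 0 = (c + d) * r) (h1 : f 1 = (c + 2 * d) * r ^ 2)
    (hrec : ∀ n : ℕ, b * f n + a * f (n + 2) = ρ * f (n + 1)) :
    ∀ n : ℕ, f n = (c + d * ((n : ℝ) + 1)) * r ^ (n + 1) := by
  have key : ∀ n : ℕ, f n = (c + d * ((n : ℝ) + 1)) * r ^ (n + 1) ∧
      f (n + 1) = (c + d * ((n : ℝ) + 2)) * r ^ (n + 2) := by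
    intro n
    induction n with
    | zero =>
      refine ⟨by rw [h0]; push_cast; ring, by rw [h1]; push_cast; ring⟩
    | succ m ih =>
      refine ⟨by rw [ih.2]; push_cast; ring_nf, ?_⟩
      have h := hrec m
      rw [ih.1, ih.2, hb, hρ] at h
      have h2 : a * f (m + 2) = a * ((c + d * ((m : ℝ) + 1 + 2)) * r ^ (m + 1 + 2)) := by
        linear_combination h
      have h3 := mul_left_cancel₀ ha h2
      rw [h3]; push_cast; ring_nf
  exact fun n => (key n).1

set_option maxHeartbeats 1000000 in
/-- Every `ρ`-invariant probability measure of the hub-and-two-spoke model is a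
convex combination `((1+ξ)/2)σ₁ + ((1-ξ)/2)σ₋₁` of the two extreme members. -/
theorem hub_two_spoke_qsd_representation
    (a b ρ : ℝ) (hb0 : 0 < b) (hb : b < 1 / 2) (ha : a = 1 - b)
    (hρ : ρ = 2 * Real.sqrt (a * b))
    (K : ℤ → ℤ → ℝ)
    (hK : ∀ x y : ℤ, K x y =
      if x = 0 then (if y = 1 ∨ y = -1 then b / 2 else 0)
      else if 0 < x then (if y = x + 1 then b else if y = x - 1 then a else 0)
      else (if y = x - 1 then b else if y = x + 1 then a else 0))
    (σ : ℝ → ℤ → ℝ)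
    (hσ : ∀ ξ : ℝ, ∀ y : ℤ, σ ξ y =
      if y = 0 then (1 - ρ) / a
      else (1 - ρ) / (2 * a) * (1 + (y.natAbs : ℝ) + ξ * (y : ℝ)) *
        Real.sqrt (b / a) ^ y.natAbs)
 :
    (∀ ξ ∈ Set.Icc (-1 : ℝ) 1, ∀ y : ℤ,
      σ ξ y = (1 + ξ) / 2 * σ 1 y + (1 - ξ) / 2 * σ (-1) y) ∧
    ∀ τ : ℤ → ℝ, (∀ y, 0 ≤ τ y) → (∑' y : ℤ, τ y) = 1 →
      (∀ y : ℤ, ∑' z : ℤ, τ z * K z y = ρ * τ y) →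
      ∃ ξ ∈ Set.Icc (-1 : ℝ) 1, ∀ y : ℤ,
        τ y = (1 + ξ) / 2 * σ 1 y + (1 - ξ) / 2 * σ (-1) y := by
  have ha0 : 0 < a := by rw [ha]; linarith
  set r := Real.sqrt (b / a) with hrdef
  have hr0 : 0 < r := Real.sqrt_pos.mpr (by positivity)
  have hr2 : r ^ 2 = b / a := Real.sq_sqrt (by positivity)
  have hb2 : b = a * r ^ 2 := by rw [hr2]; field_simp
  have hba : b / a < 1 := (div_lt_one ha0).mpr (by linarith)
  have hr1 : r < 1 := by nlinarith [hr2, hr0, hba]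
  have hρ2 : ρ = 2 * a * r := by
    have hab2 : a * b = a ^ 2 * (b / a) := by field_simp
    rw [hρ, hab2, Real.sqrt_mul (sq_nonneg a), Real.sqrt_sq ha0.le, ← hrdef]; ring
  -- Part 1
  have part1 : ∀ ξ : ℝ, ∀ y : ℤ,
      σ ξ y = (1 + ξ) / 2 * σ 1 y + (1 - ξ) / 2 * σ (-1) y := by
    intro ξ y
    rw [hσ, hσ, hσ]
    by_cases hy : y = 0
    · simp only [if_pos hy]; ring
    · simp only [if_neg hy]; ring
  refine ⟨fun ξ _ y => part1 ξ y, ?_⟩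
  intro τ hτ0 hτsum hτinv
  -- two-point support of the kernel
  have hKzero : ∀ y z : ℤ, z ≠ y - 1 → z ≠ y + 1 → K z y = 0 := by
    intro y z h1 h2
    rw [hK]
    split_ifs <;> first | rfl | omega
  have hEq : ∀ y : ℤ, τ (y - 1) * K (y - 1) y + τ (y + 1) * K (y + 1) y = ρ * τ y := by
    intro y
    have hs : ∑' z : ℤ, τ z * K z y = ∑ z ∈ ({y - 1, y + 1} : Finset ℤ), τ z * K z y := by
      refine tsum_eq_sum ?_
      intro z hz
      simp only [Finset.mem_insert, Finset.mem_singleton, not_or] at hz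
      rw [hKzero y z hz.1 hz.2, mul_zero]
    have h := hτinv y
    rw [hs, Finset.sum_pair (by omega : y - 1 ≠ y + 1)] at h
    linarith
  -- recurrences
  have hrecP : ∀ n : ℤ, 2 ≤ n → b * τ (n - 1) + a * τ (n + 1) = ρ * τ n := by
    intro n hn
    have h := hEq n
    have h1 : K (n - 1) n = b := by
      rw [hK, if_neg (by omega), if_pos (by omega : (0:ℤ) < n - 1),
        if_pos (by omega : n = n - 1 + 1)]
    have h2 : K (n + 1) n = a := by
      rw [hK, if_neg (by omega), if_pos (by omega : (0:ℤ) < n + 1),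
        if_neg (by omega : ¬ n = n + 1 + 1), if_pos (by omega : n = n + 1 - 1)]
    rw [h1, h2] at h
    linarith
  have hrecN : ∀ n : ℤ, 2 ≤ n → b * τ (-(n - 1)) + a * τ (-(n + 1)) = ρ * τ (-n) := by
    intro n hn
    have h := hEq (-n)
    have h1 : K (-n - 1) (-n) = a := by
      rw [hK, if_neg (by omega), if_neg (by omega : ¬ (0:ℤ) < -n - 1),
        if_neg (by omega : ¬ -n = -n - 1 - 1), if_pos (by omega : -n = -n - 1 + 1)]
    have h2 : K (-n + 1) (-n) = b := by
      rw [hK, if_neg (by omega), if_neg (by omega : ¬ (0:ℤ) < -n + 1),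
        if_pos (by omega : -n = -n + 1 - 1)]
    rw [h1, h2, show -n - 1 = -(n + 1) by ring, show -n + 1 = -(n - 1) by ring] at h
    linarith
  -- boundary equations
  have hE0 : a * (τ 1 + τ (-1)) = ρ * τ 0 := by
    have h := hEq 0
    have h1 : K ((0:ℤ) - 1) 0 = a := by rw [hK]; norm_num
    have h2 : K ((0:ℤ) + 1) 0 = a := by rw [hK]; norm_num
    rw [h1, h2] at h
    norm_num at h
    linarith
  have hE1 : b / 2 * τ 0 + a * τ 2 = ρ * τ 1 := by
    have h := hEq 1
    have h1 : K ((1:ℤ) - 1) 1 = b / 2 := by rw [hK]; norm_num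
    have h2 : K ((1:ℤ) + 1) 1 = a := by rw [hK]; norm_num
    rw [h1, h2] at h
    norm_num at h
    linarith
  have hE1' : b / 2 * τ 0 + a * τ (-2) = ρ * τ (-1) := by
    have h := hEq (-1)
    have h1 : K ((-1:ℤ) - 1) (-1) = a := by rw [hK]; norm_num
    have h2 : K ((-1:ℤ) + 1) (-1) = b / 2 := by rw [hK]; norm_num
    rw [h1, h2] at h
    norm_num at h
    linarith
  -- closed forms
  have hrne : r ≠ 0 := hr0.ne'
  have hane : a ≠ 0 := ha0.ne'
  obtain ⟨c, hcdef⟩ : ∃ c : ℝ, c = 2 * τ 1 / r - τ 2 / r ^ 2 := ⟨_, rfl⟩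
  obtain ⟨d, hddef⟩ : ∃ d : ℝ, d = τ 2 / r ^ 2 - τ 1 / r := ⟨_, rfl⟩
  obtain ⟨c', hc'def⟩ : ∃ c' : ℝ, c' = 2 * τ (-1) / r - τ (-2) / r ^ 2 := ⟨_, rfl⟩
  obtain ⟨d', hd'def⟩ : ∃ d' : ℝ, d' = τ (-2) / r ^ 2 - τ (-1) / r := ⟨_, rfl⟩
  have ht1 : τ 1 = (c + d) * r := by rw [hcdef, hddef]; field_simp; ring
  have ht2 : τ 2 = (c + 2 * d) * r ^ 2 := by rw [hcdef, hddef]; field_simp; ring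
  have ht1' : τ (-1) = (c' + d') * r := by rw [hc'def, hd'def]; field_simp; ring
  have ht2' : τ (-2) = (c' + 2 * d') * r ^ 2 := by rw [hc'def, hd'def]; field_simp; ring
  have hposform : ∀ n : ℕ, τ ((n : ℤ) + 1) = (c + d * ((n : ℝ) + 1)) * r ^ (n + 1) := by
    refine linear_geo_aux a b ρ r hane hb2 hρ2 (fun n => τ ((n : ℤ) + 1)) c d
      (by norm_num [ht1]) (by norm_num [ht2]) ?_
    intro n
    have h := hrecP ((n : ℤ) + 2) (by omega)
    rw [show (n : ℤ) + 2 - 1 = (n : ℤ) + 1 by ring] at h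
    push_cast
    convert h using 3 <;> push_cast <;> ring
  have hnegform : ∀ n : ℕ, τ (-((n : ℤ) + 1)) = (c' + d' * ((n : ℝ) + 1)) * r ^ (n + 1) := by
    refine linear_geo_aux a b ρ r hane hb2 hρ2 (fun n => τ (-((n : ℤ) + 1))) c' d'
      (by norm_num [ht1']) (by norm_num [ht2']) ?_
    intro n
    have h := hrecN ((n : ℤ) + 2) (by omega)
    rw [show (n : ℤ) + 2 - 1 = (n : ℤ) + 1 by ring] at h
    push_cast
    convert h using 4 <;> push_cast <;> ring
  -- boundary algebra
  have ht0 : τ 0 = 2 * c := by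
    have h := hE1
    rw [ht1, ht2, hb2, hρ2] at h
    have h2 : a * r ^ 2 * (τ 0 - 2 * c) = 0 := by linear_combination 2 * h
    have hne : a * r ^ 2 ≠ 0 := by positivity
    have := (mul_eq_zero.mp h2).resolve_left hne
    linarith
  have ht0' : τ 0 = 2 * c' := by
    have h := hE1'
    rw [ht1', ht2', hb2, hρ2] at h
    have h2 : a * r ^ 2 * (τ 0 - 2 * c') = 0 := by linear_combination 2 * h
    have hne : a * r ^ 2 ≠ 0 := by positivity
    have := (mul_eq_zero.mp h2).resolve_left hne
    linarith
  have hcc' : c' = c := by linarith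
  have hdd' : d + d' = 2 * c := by
    have h := hE0
    rw [ht1, ht1', ht0, hρ2, hcc'] at h
    have h2 : a * r * (d + d' - 2 * c) = 0 := by linear_combination h
    have hne : a * r ≠ 0 := by positivity
    have := (mul_eq_zero.mp h2).resolve_left hne
    linarith
  -- nonnegativity of d, d'
  have hd0 : 0 ≤ d := by
    by_contra hdneg
    rw [not_le] at hdneg
    obtain ⟨N, hN⟩ := exists_nat_gt (c / (-d))
    have hτN := hτ0 ((N : ℤ) + 1)
    rw [hposform N] at hτN
    have hrp : (0:ℝ) < r ^ (N + 1) := pow_pos hr0 _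
    have hcN : c < (N : ℝ) * (-d) := (div_lt_iff₀ (by linarith)).mp hN
    have hz : (N : ℝ) * (-d) + d * (N : ℝ) = 0 := by ring
    have hneg : c + d * ((N : ℝ) + 1) < 0 := by linarith only [hcN, hdneg, hz]
    have hm := mul_neg_of_neg_of_pos hneg hrp
    linarith only [hτN, hm]
  have hd'0 : 0 ≤ d' := by
    by_contra hdneg
    rw [not_le] at hdneg
    obtain ⟨N, hN⟩ := exists_nat_gt (c' / (-d'))
    have hτN := hτ0 (-((N : ℤ) + 1))
    rw [hnegform N] at hτN
    have hrp : (0:ℝ) < r ^ (N + 1) := pow_pos hr0 _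
    have hcN : c' < (N : ℝ) * (-d') := (div_lt_iff₀ (by linarith)).mp hN
    have hz : (N : ℝ) * (-d') + d' * (N : ℝ) = 0 := by ring
    have hneg : c' + d' * ((N : ℝ) + 1) < 0 := by linarith only [hcN, hdneg, hz]
    have hm := mul_neg_of_neg_of_pos hneg hrp
    linarith only [hτN, hm]
  -- total mass computation
  have hgeo : HasSum (fun n : ℕ => r ^ n) (1 - r)⁻¹ :=
    hasSum_geometric_of_lt_one hr0.le hr1
  have hng : HasSum (fun n : ℕ => (n : ℝ) * r ^ n) (r / (1 - r) ^ 2) :=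
    hasSum_coe_mul_geometric_of_norm_lt_one
      (by rw [Real.norm_eq_abs, abs_of_pos hr0]; exact hr1)
  have hgpos : HasSum (fun n : ℕ => c * r ^ n + d * ((n : ℝ) * r ^ n))
      (c * (1 - r)⁻¹ + d * (r / (1 - r) ^ 2)) := (hgeo.mul_left c).add (hng.mul_left d)
  have hupd := hgpos.update 0 (τ 0)
  have hfun : Function.update (fun n : ℕ => c * r ^ n + d * ((n : ℝ) * r ^ n)) 0 (τ 0)
      = fun n : ℕ => τ (n : ℤ) := by
    funext n
    cases n with
    | zero => simp
    | succ m =>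
      rw [Function.update_of_ne (Nat.succ_ne_zero m)]
      rw [show ((m + 1 : ℕ) : ℤ) = (m : ℤ) + 1 by push_cast; ring, hposform m]
      push_cast [pow_succ]
      ring
  rw [hfun] at hupd
  have hgneg : HasSum (fun n : ℕ => (c' + d') * r * r ^ n + d' * r * ((n : ℝ) * r ^ n))
      ((c' + d') * r * (1 - r)⁻¹ + d' * r * (r / (1 - r) ^ 2)) :=
    (hgeo.mul_left _).add (hng.mul_left _)
  have hfun' : (fun n : ℕ => (c' + d') * r * r ^ n + d' * r * ((n : ℝ) * r ^ n))
      = fun n : ℕ => τ (-((n : ℤ) + 1)) := by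
    funext n
    rw [hnegform n]
    push_cast; ring
  rw [hfun'] at hgneg
  have htot := HasSum.of_nat_of_neg_add_one hupd hgneg
  have heq1 := htot.tsum_eq
  rw [hτsum] at heq1
  have h1r : (0:ℝ) < 1 - r := by linarith
  have hc2 : 2 * c = (1 - r) ^ 2 := by
    rw [ht0, hcc', show d' = 2 * c - d by linarith] at heq1
    norm_num at heq1
    have hval : 2 * c - c + (c * (1 - r)⁻¹ + d * (r / (1 - r) ^ 2)) +
        ((c + (2 * c - d)) * r * (1 - r)⁻¹ + (2 * c - d) * r * (r / (1 - r) ^ 2))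
        = 2 * c / (1 - r) ^ 2 := by
      field_simp
      ring
    rw [hval] at heq1
    field_simp at heq1
    linarith
  -- conclusion
  have hcpos : 0 < c := by
    have hp := pow_pos h1r 2
    linarith only [hp, hc2]
  have hd2c : d ≤ 2 * c := by linarith only [hdd', hd'0]
  refine ⟨d / c - 1, ⟨by
      have : (0:ℝ) ≤ d / c := div_nonneg hd0 hcpos.le
      linarith, by
      have : d / c ≤ 2 := (div_le_iff₀ hcpos).mpr (by linarith)
      linarith⟩, ?_⟩
  intro y
  rw [← part1 (d / c - 1) y, hσ]
  have hcoef : (1 - ρ) / (2 * a) = c := by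
    rw [hρ2]
    rw [div_eq_iff (by positivity : (2:ℝ) * a ≠ 0)]
    linear_combination (-a) * hc2 - ha + hb2
  by_cases hy : y = 0
  · rw [if_pos hy, hy, ht0, hρ2]
    rw [eq_div_iff hane]
    linear_combination a * hc2 + ha - hb2
  · rw [if_neg hy]
    rcases lt_or_gt_of_ne hy with hyneg | hypos
    · obtain ⟨n, rfl⟩ : ∃ n : ℕ, y = -((n : ℤ) + 1) := ⟨(-y - 1).toNat, by omega⟩
      have hna : (-((n : ℤ) + 1)).natAbs = n + 1 := by omega
      rw [hna, hnegform n, hcc', show d' = 2 * c - d by linarith, hcoef]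
      push_cast
      field_simp
      ring
    · obtain ⟨n, rfl⟩ : ∃ n : ℕ, y = (n : ℤ) + 1 := ⟨(y - 1).toNat, by omega⟩
      have hna : ((n : ℤ) + 1).natAbs = n + 1 := by omega
      rw [hna, hposform n, hcoef]
      push_cast
      field_simp
      ring
end

section
/- For the remaining-lifetime kernel K on ℕ₀ defined by K(0,n) = f_n for n ≥ 1 and K(n,n−1) = 1 for n ≥ 1, where (f_n) are the first-return probabilities to 0 of the hub-and-one-spoke gambler's ruin walk (with generating function F(z) = (1−√(1−4abz²))/2 satisfying F(R) = 1/2 for R = 1/(2√(ab))), there exists no nonzero nonnegative function h : ℕ₀ → ℝ≥0 with Kh = ρh for ρ = 2√(ab). The function ĥ(x) = R^x satisfies Kĥ ≤ ρĥ (strict inequality at x = 0), i.e., ĥ is ρ-superharmonic but not ρ-harmonic. -/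
open Filter Topology

/-- For the remaining-lifetime kernel `K` on `ℕ` (row 0 given by the
first-return probabilities `f` of the gambler's ruin walk, `K(n, n-1) = 1` for
`n ≥ 1`), there is no nonzero nonnegative `ρ`-harmonic function, and
`ĥ(x) = R^x` is `ρ`-superharmonic with strict inequality at `0`. -/
theorem remaining_lifetime_no_harmonic
    (a b ρ R : ℝ) (hb0 : 0 < b) (hb : b < 1 / 2) (ha : a = 1 - b)
    (hρ : ρ = 2 * Real.sqrt (a * b)) (hR : R = ρ⁻¹)
    (f : ℕ → ℝ) (hf0 : f 0 = 0) (hfnn : ∀ n, 0 ≤ f n)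
    (hfodd : ∀ n, Odd n → f n = 0)
    (hFR : ∑' n : ℕ, f n * R ^ n = 1 / 2)
    (hF1 : ∑' n : ℕ, f n = b)
    (K : ℕ → ℕ → ℝ)
    (hK : ∀ x y : ℕ, K x y =
      if x = 0 then f (y + 1) else if y = x - 1 then 1 else 0) :
    (∀ h : ℕ → ℝ, (∀ n, 0 ≤ h n) → (∀ x : ℕ, ∑' y, K x y * h y = ρ * h x) →
        ∀ n, h n = 0) ∧
    (∀ x : ℕ, ∑' y, K x y * R ^ y ≤ ρ * R ^ x) ∧
    (∑' y, K 0 y * R ^ y) < ρ * R ^ (0 : ℕ) := by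
  have ha0 : 0 < a := by rw [ha]; linarith
  have hab : 0 < a * b := mul_pos ha0 hb0
  have hρ0 : 0 < ρ := by rw [hρ]; positivity
  have hR0 : 0 < R := by rw [hR]; positivity
  have hRρ : R * ρ = 1 := by rw [hR]; field_simp
  have hrow : ∀ (x : ℕ) (h : ℕ → ℝ), ∑' y, K (x + 1) y * h y = h x := by
    intro x h
    have hz : ∀ (y : ℕ), y ≠ x → K (x + 1) y * h y = 0 := by
      intro y hy
      rw [hK]
      simp [Nat.succ_ne_zero, hy]
    rw [tsum_eq_single x hz, hK]
    simp
  have hrow0 : ∀ (h : ℕ → ℝ), ∑' y, K 0 y * h y = ∑' y, f (y + 1) * h y := by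
    intro h
    apply tsum_congr
    intro y
    rw [hK]
    simp
  have hsum : Summable (fun n => f n * R ^ n) := by
    by_contra hc
    rw [tsum_eq_zero_of_not_summable hc] at hFR
    norm_num at hFR
  have hshift : ∑' n : ℕ, f (n + 1) * R ^ (n + 1) = 1 / 2 := by
    have h1 := Summable.tsum_eq_zero_add hsum
    rw [hFR, hf0] at h1
    simpa using h1.symm
  have hS : ∑' n : ℕ, f (n + 1) * R ^ n = ρ / 2 := by
    have h1 : ∑' n : ℕ, R * (f (n + 1) * R ^ n) = R * ∑' n : ℕ, f (n + 1) * R ^ n :=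
      tsum_mul_left
    have h2 : ∀ n : ℕ, R * (f (n + 1) * R ^ n) = f (n + 1) * R ^ (n + 1) := by
      intro n; ring
    rw [tsum_congr h2, hshift] at h1
    have hRne : R ≠ 0 := ne_of_gt hR0
    have : ρ * (R * ∑' n : ℕ, f (n + 1) * R ^ n) = ρ * (1 / 2) := by rw [← h1]
    rw [← mul_assoc, mul_comm ρ R, hRρ, one_mul] at this
    linarith
  refine ⟨?_, ?_, ?_⟩
  · intro h hnn hharm
    have hform : ∀ n, h n = R ^ n * h 0 := by
      intro n
      induction n with
      | zero => simp
      | succ k ih =>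
        have h1 := hharm (k + 1)
        rw [hrow k h] at h1
        have h2 : h (k + 1) = R * h k := by
          have := congrArg (fun t => R * t) h1
          rw [← mul_assoc, hRρ, one_mul] at this
          linarith
        rw [h2, ih, pow_succ]; ring
    have h0eq := hharm 0
    rw [hrow0 h] at h0eq
    have h3 : ∑' y : ℕ, f (y + 1) * h y = (∑' y : ℕ, f (y + 1) * R ^ y) * h 0 := by
      rw [← tsum_mul_right]
      apply tsum_congr
      intro y
      rw [hform y]; ring
    rw [h3, hS] at h0eq
    have h00 : h 0 = 0 := by nlinarith
    intro n
    rw [hform n, h00, mul_zero]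
  · intro x
    cases x with
    | zero =>
      rw [hrow0 (fun y => R ^ y), hS]
      simp only [pow_zero, mul_one]
      linarith
    | succ k =>
      rw [hrow k (fun y => R ^ y)]
      have : ρ * R ^ (k + 1) = R ^ k := by
        rw [pow_succ, ← mul_assoc, mul_comm ρ (R ^ k), mul_assoc, mul_comm ρ R, hRρ, mul_one]
      linarith [this.ge]
  · rw [hrow0 (fun y => R ^ y), hS]
    simp only [pow_zero, mul_one]
    linarith
end
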